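/- The Aronsson function w(x₁,x₂) = x₁^{4/3} - x₂^{4/3} is infinity-harmonic on the open set {x ∈ ℝ² : x₁ ≠ 0 and x₂ ≠ 0}, i.e. Δ_∞ w = w₁²w₁₁ + 2w₁w₂w₁₂ + w₂²w₂₂ = 0 there. -/

import Mathlib

noncomputable def d1 (f : ℝ × ℝ → ℝ) (x : ℝ × ℝ) : ℝ := fderiv ℝ f x (1, 0)
noncomputable def d2 (f : ℝ × ℝ → ℝ) (x : ℝ × ℝ) : ℝ := fderiv ℝ f x (0, 1)

/-- Aronsson's function `w(x₁,x₂) = |x₁|^{4/3} - |x₂|^{4/3}`. -/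
noncomputable def aronsson (x : ℝ × ℝ) : ℝ :=
  |x.1| ^ ((4 : ℝ) / 3) - |x.2| ^ ((4 : ℝ) / 3)

/-- first derivative of `|t|^{4/3}` -/
noncomputable def gg (t : ℝ) : ℝ := (4/3) * t * |t| ^ (-(2:ℝ)/3)

/-- second derivative of `|t|^{4/3}` -/
noncomputable def GG (t : ℝ) : ℝ := (4/9) * |t| ^ (-(2:ℝ)/3)

lemma abs_eventually_pos {t : ℝ} (ht : 0 < t) : (fun s : ℝ => |s|) =ᶠ[nhds t] id := by
  filter_upwards [eventually_gt_nhds ht] with s hs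
  exact abs_of_pos hs

lemma abs_eventually_neg {t : ℝ} (ht : t < 0) : (fun s : ℝ => |s|) =ᶠ[nhds t] (fun s => -s) := by
  filter_upwards [eventually_lt_nhds ht] with s hs
  exact abs_of_neg hs

lemma hasDerivAt_f {t : ℝ} (ht : t ≠ 0) :
    HasDerivAt (fun s => |s| ^ ((4:ℝ)/3)) (gg t) t := by
  rcases ht.lt_or_gt with h | h
  · have h1 : HasDerivAt (fun s : ℝ => (-s) ^ ((4:ℝ)/3))
        ((-1) * ((4:ℝ)/3) * (-t) ^ ((4:ℝ)/3 - 1)) t := by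
      have := (hasDerivAt_neg t).rpow_const (p := (4:ℝ)/3) (Or.inl (by linarith))
      simpa using this
    have h2 : (fun s : ℝ => |s| ^ ((4:ℝ)/3)) =ᶠ[nhds t] (fun s : ℝ => (-s) ^ ((4:ℝ)/3)) := by
      filter_upwards [eventually_lt_nhds h] with s hs
      rw [abs_of_neg hs]
    have h3 := h1.congr_of_eventuallyEq h2
    refine h3.congr_deriv ?_
    have hnt : (0:ℝ) < -t := by linarith
    rw [gg, abs_of_neg h]
    have : (4:ℝ)/3 - 1 = -(2:ℝ)/3 + 1 := by norm_num
    rw [this, Real.rpow_add hnt, Real.rpow_one]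
    ring
  · have h1 : HasDerivAt (fun s : ℝ => s ^ ((4:ℝ)/3)) (((4:ℝ)/3) * t ^ ((4:ℝ)/3 - 1)) t :=
      Real.hasDerivAt_rpow_const (Or.inl h.ne')
    have h2 : (fun s : ℝ => |s| ^ ((4:ℝ)/3)) =ᶠ[nhds t] (fun s : ℝ => s ^ ((4:ℝ)/3)) := by
      filter_upwards [eventually_gt_nhds h] with s hs
      rw [abs_of_pos hs]
    have h3 := h1.congr_of_eventuallyEq h2
    refine h3.congr_deriv ?_
    rw [gg, abs_of_pos h]
    have : (4:ℝ)/3 - 1 = -(2:ℝ)/3 + 1 := by norm_num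
    rw [this, Real.rpow_add h, Real.rpow_one]
    ring

lemma hasDerivAt_g {t : ℝ} (ht : t ≠ 0) : HasDerivAt gg (GG t) t := by
  rcases ht.lt_or_gt with h | h
  · have h1 : HasDerivAt (fun s : ℝ => -((4:ℝ)/3) * (-s) ^ ((1:ℝ)/3))
        (-((4:ℝ)/3) * ((-1) * ((1:ℝ)/3) * (-t) ^ ((1:ℝ)/3 - 1))) t := by
      have := ((hasDerivAt_neg t).rpow_const (p := (1:ℝ)/3) (Or.inl (by linarith))).const_mul
        (-((4:ℝ)/3))
      simpa [mul_comm, mul_assoc, mul_left_comm] using this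
    have h2 : gg =ᶠ[nhds t] (fun s : ℝ => -((4:ℝ)/3) * (-s) ^ ((1:ℝ)/3)) := by
      filter_upwards [eventually_lt_nhds h] with s hs
      have hns : (0:ℝ) < -s := by linarith
      rw [gg, abs_of_neg hs]
      have : (1:ℝ)/3 = -(2:ℝ)/3 + 1 := by norm_num
      rw [this, Real.rpow_add hns, Real.rpow_one]
      ring
    have h3 := h1.congr_of_eventuallyEq h2
    refine h3.congr_deriv ?_
    have hnt : (0:ℝ) < -t := by linarith
    rw [GG, abs_of_neg h]
    have : (1:ℝ)/3 - 1 = -(2:ℝ)/3 := by norm_num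
    rw [this]
    ring
  · have h1 : HasDerivAt (fun s : ℝ => ((4:ℝ)/3) * s ^ ((1:ℝ)/3))
        (((4:ℝ)/3) * (((1:ℝ)/3) * t ^ ((1:ℝ)/3 - 1))) t :=
      (Real.hasDerivAt_rpow_const (Or.inl h.ne')).const_mul _
    have h2 : gg =ᶠ[nhds t] (fun s : ℝ => ((4:ℝ)/3) * s ^ ((1:ℝ)/3)) := by
      filter_upwards [eventually_gt_nhds h] with s hs
      rw [gg, abs_of_pos hs]
      have : (1:ℝ)/3 = -(2:ℝ)/3 + 1 := by norm_num
      rw [this, Real.rpow_add hs, Real.rpow_one]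
      ring
    have h3 := h1.congr_of_eventuallyEq h2
    refine h3.congr_deriv ?_
    rw [GG, abs_of_pos h]
    have : (1:ℝ)/3 - 1 = -(2:ℝ)/3 := by norm_num
    rw [this]
    ring

lemma hasFDerivAt_aronsson {y : ℝ × ℝ} (h1 : y.1 ≠ 0) (h2 : y.2 ≠ 0) :
    HasFDerivAt aronsson
      (gg y.1 • ContinuousLinearMap.fst ℝ ℝ ℝ - gg y.2 • ContinuousLinearMap.snd ℝ ℝ ℝ) y := by
  have hA : HasFDerivAt (fun y : ℝ × ℝ => |y.1| ^ ((4:ℝ)/3))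
      (gg y.1 • ContinuousLinearMap.fst ℝ ℝ ℝ) y :=
    (hasDerivAt_f h1).comp_hasFDerivAt y (hasFDerivAt_fst)
  have hB : HasFDerivAt (fun y : ℝ × ℝ => |y.2| ^ ((4:ℝ)/3))
      (gg y.2 • ContinuousLinearMap.snd ℝ ℝ ℝ) y :=
    (hasDerivAt_f h2).comp_hasFDerivAt y (hasFDerivAt_snd)
  exact hA.sub hB

lemma d1_aronsson_eq {y : ℝ × ℝ} (h1 : y.1 ≠ 0) (h2 : y.2 ≠ 0) :
    d1 aronsson y = gg y.1 := by
  rw [d1, (hasFDerivAt_aronsson h1 h2).fderiv]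
  simp

lemma d2_aronsson_eq {y : ℝ × ℝ} (h1 : y.1 ≠ 0) (h2 : y.2 ≠ 0) :
    d2 aronsson y = -gg y.2 := by
  rw [d2, (hasFDerivAt_aronsson h1 h2).fderiv]
  simp

lemma sq_g_mul_G {t : ℝ} (ht : t ≠ 0) : (gg t) ^ 2 * GG t = 64 / 81 := by
  have habs : (0:ℝ) < |t| := abs_pos.mpr ht
  have ht2 : t ^ 2 = |t| ^ ((2:ℝ)) := by
    rw [show ((2:ℝ)) = ((2:ℕ):ℝ) by norm_num, Real.rpow_natCast, sq_abs]
  have key : t ^ 2 * (|t| ^ (-(2:ℝ)/3)) ^ 2 * |t| ^ (-(2:ℝ)/3) = 1 := by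
    rw [ht2, ← Real.rpow_natCast (|t| ^ (-(2:ℝ)/3)) 2, ← Real.rpow_mul habs.le,
      ← Real.rpow_add habs, ← Real.rpow_add habs]
    norm_num
  rw [gg, GG]
  nlinarith [key]

/-- The Aronsson function is infinity-harmonic away from the coordinate axes:
`Δ_∞ w = w₁²w₁₁ + 2w₁w₂w₁₂ + w₂²w₂₂ = 0` whenever `x₁ ≠ 0` and `x₂ ≠ 0`. -/
theorem stmt9 (x : ℝ × ℝ) (h1 : x.1 ≠ 0) (h2 : x.2 ≠ 0) :
    (d1 aronsson x) ^ 2 * d1 (d1 aronsson) x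
      + 2 * d1 aronsson x * d2 aronsson x * d1 (d2 aronsson) x
      + (d2 aronsson x) ^ 2 * d2 (d2 aronsson) x = 0 := by
  have hnbd : ∀ᶠ y : ℝ × ℝ in nhds x, y.1 ≠ 0 ∧ y.2 ≠ 0 := by
    have ho : IsOpen {y : ℝ × ℝ | y.1 ≠ 0 ∧ y.2 ≠ 0} :=
      ((isOpen_ne.preimage continuous_fst).inter (isOpen_ne.preimage continuous_snd))
    exact ho.mem_nhds ⟨h1, h2⟩
  have e1 : d1 aronsson =ᶠ[nhds x] fun y => gg y.1 := by
    filter_upwards [hnbd] with y ⟨hy1, hy2⟩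
    exact d1_aronsson_eq hy1 hy2
  have e2 : d2 aronsson =ᶠ[nhds x] fun y => -gg y.2 := by
    filter_upwards [hnbd] with y ⟨hy1, hy2⟩
    exact d2_aronsson_eq hy1 hy2
  have hG1 : HasFDerivAt (fun y : ℝ × ℝ => gg y.1)
      (GG x.1 • ContinuousLinearMap.fst ℝ ℝ ℝ) x :=
    (hasDerivAt_g h1).comp_hasFDerivAt x (hasFDerivAt_fst)
  have hG2 : HasFDerivAt (fun y : ℝ × ℝ => -gg y.2)
      (-(GG x.2 • ContinuousLinearMap.snd ℝ ℝ ℝ)) x :=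
    ((hasDerivAt_g h2).comp_hasFDerivAt x (hasFDerivAt_snd)).neg
  have h11 : d1 (d1 aronsson) x = GG x.1 := by
    rw [d1, e1.fderiv_eq, hG1.fderiv]; simp
  have h12 : d1 (d2 aronsson) x = 0 := by
    rw [d1, e2.fderiv_eq, hG2.fderiv]; simp
  have h22 : d2 (d2 aronsson) x = -GG x.2 := by
    rw [d2, e2.fderiv_eq, hG2.fderiv]; simp
  rw [h11, h12, h22, d1_aronsson_eq h1 h2, d2_aronsson_eq h1 h2]
  have k1 := sq_g_mul_G h1
  have k2 := sq_g_mul_G h2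
  ring_nf
  nlinarith [k1, k2]
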